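/- Monotonicity of f-variety under mixing with uninformative distributions: for any joint distribution D on C × P with strictly positive probabilities, any uninformative distribution D0 on C × P with strictly positive probabilities, and any 0 < α < 1, V^f((1−α)D + αD0) ≤ (1−α)·V^f(D). -/

import Mathlib

open Finset

/-- The f-variety of a joint distribution `D` on `C × P`: the f-divergence between `D`
and its uninformative counterpart `U ⊗ P_D`. -/
noncomputable def fVariety {C P : Type*} [Fintype C] [Fintype P]
    (f : ℝ → ℝ) (D : C → P → ℝ) : ℝ :=
  ∑ c : C, ∑ p : P,
    D c p * f ((1 / (Fintype.card C : ℝ)) * (∑ c' : C, D c' p) / D c p)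

lemma key_pointwise (f : ℝ → ℝ) (hf : ConvexOn ℝ (Set.Ici (0 : ℝ)) f) (hf1 : f 1 = 0)
    (a b a0 α : ℝ) (ha : 0 < a) (hb : 0 ≤ b) (ha0 : 0 < a0)
    (hα0 : 0 < α) (hα1 : α < 1) :
    ((1 - α) * a + α * a0) * f (((1 - α) * b + α * a0) / ((1 - α) * a + α * a0)) ≤
      (1 - α) * (a * f (b / a)) := by
  have h1α : 0 < 1 - α := by linarith
  have hs : 0 < (1 - α) * a + α * a0 := by positivity
  set s := (1 - α) * a + α * a0 with hsdef
  have hw1 : 0 ≤ (1 - α) * a / s := by positivity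
  have hw2 : 0 ≤ α * a0 / s := by positivity
  have hwsum : (1 - α) * a / s + α * a0 / s = 1 := by
    field_simp
    exact hsdef.symm
  have hx : b / a ∈ Set.Ici (0 : ℝ) := Set.mem_Ici.mpr (by positivity)
  have hy : (1 : ℝ) ∈ Set.Ici (0 : ℝ) := by norm_num
  have := hf.2 hx hy hw1 hw2 hwsum
  have hcomb : ((1 - α) * a / s) • (b / a) + (α * a0 / s) • (1 : ℝ)
      = ((1 - α) * b + α * a0) / s := by
    simp only [smul_eq_mul]
    field_simp
  rw [hcomb] at this
  have := mul_le_mul_of_nonneg_left this hs.le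
  calc s * f (((1 - α) * b + α * a0) / s)
      ≤ s * (((1 - α) * a / s) • f (b / a) + (α * a0 / s) • f 1) := this
    _ = (1 - α) * (a * f (b / a)) := by
        simp only [smul_eq_mul, hf1, mul_zero, add_zero]
        field_simp

/-- Monotonicity of the f-variety under mixing with an uninformative distribution
`D0 = U ⊗ P0`. -/
theorem fVariety_monotone_under_mixing
    {C P : Type*} [Fintype C] [Fintype P] [Nonempty C] [Nonempty P]
    (f : ℝ → ℝ) (hf : ConvexOn ℝ (Set.Ici (0 : ℝ)) f) (hf1 : f 1 = 0)
    (D : C → P → ℝ)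
    (hpos : ∀ c p, 0 < D c p) (hsum : ∑ c : C, ∑ p : P, D c p = 1)
    (P0 : P → ℝ) (hP0 : ∀ p, 0 < P0 p) (hP0sum : ∑ p : P, P0 p = 1)
    (α : ℝ) (hα0 : 0 < α) (hα1 : α < 1) :
    fVariety f
        (fun c p => (1 - α) * D c p + α * ((1 / (Fintype.card C : ℝ)) * P0 p)) ≤
      (1 - α) * fVariety f D := by
  have hn : (0 : ℝ) < (Fintype.card C : ℝ) := by
    exact_mod_cast Fintype.card_pos
  unfold fVariety
  rw [Finset.mul_sum]
  apply Finset.sum_le_sum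
  intro c _
  rw [Finset.mul_sum]
  apply Finset.sum_le_sum
  intro p _
  have hmarg : (1 / (Fintype.card C : ℝ)) *
      (∑ c' : C, ((1 - α) * D c' p + α * ((1 / (Fintype.card C : ℝ)) * P0 p)))
      = (1 - α) * ((1 / (Fintype.card C : ℝ)) * ∑ c' : C, D c' p)
        + α * ((1 / (Fintype.card C : ℝ)) * P0 p) := by
    rw [Finset.sum_add_distrib, Finset.sum_const, ← Finset.mul_sum]
    simp only [Finset.card_univ, nsmul_eq_mul]
    field_simp
  have hb : 0 ≤ (1 / (Fintype.card C : ℝ)) * ∑ c' : C, D c' p := by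
    have : 0 ≤ ∑ c' : C, D c' p :=
      Finset.sum_nonneg fun c' _ => (hpos c' p).le
    positivity
  have ha0 : 0 < (1 / (Fintype.card C : ℝ)) * P0 p := by
    have := hP0 p; positivity
  have := key_pointwise f hf hf1 (D c p)
    ((1 / (Fintype.card C : ℝ)) * ∑ c' : C, D c' p)
    ((1 / (Fintype.card C : ℝ)) * P0 p) α (hpos c p) hb ha0 hα0 hα1
  beta_reduce
  rw [hmarg]
  exact this
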